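/- arXiv:1611.02219 — 3 statements merged into one kernel-verified Lean document; each statement's English description precedes it below -/
import Mathlib

section
/- Membership of the interpolant in the cone: assume ‖λ_k‖_{X'} ≤ 1 for 1 ≤ k ≤ n, and let S ⊂ X satisfy sup_{g∈S} dist(g, X_k) ≤ ε_k for 0 ≤ k ≤ n−1, with ε_0 := sup_{g∈S} ‖g‖_X. Then for every f ∈ S, the unique coefficients (c_1,…,c_n) in the expansion J_n(f) = Σ_{i=1}^n c_i q_i satisfy |c_i| ≤ (1 + Λ_{i-1}) ε_{i-1} for every 1 ≤ i ≤ n; that is, J_n(f) ∈ K_n(1). -/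
/-- Membership of the interpolant in the cone: assuming `‖λ_k‖ ≤ 1` and
`sup_{g∈S} dist(g, X_k) ≤ ε_k` for `0 ≤ k ≤ n−1` (with `ε₀ = sup_{g∈S} ‖g‖`), for every
`f ∈ S` the unique coefficients of the expansion `Jₙ(f) = Σᵢ cᵢ qᵢ` satisfy
`|cᵢ| ≤ (1 + Λ_{i-1}) ε_{i-1}` for all `1 ≤ i ≤ n`, i.e. `Jₙ(f) ∈ Kₙ(1)`.
(Indices here are 0-based: the `i`-th coefficient `c i` for `i : Fin n` is bounded by
`(1 + ‖J i‖) ε i`, with `Λ₀ = ‖J 0‖ = 0`.) -/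
theorem geim_interpolant_in_cone
    {X : Type*} [NormedAddCommGroup X] [NormedSpace ℝ X] [CompleteSpace X]
    (n : ℕ) (q : Fin n → X) (lam : Fin n → X →L[ℝ] ℝ)
    (hlam : ∀ i : Fin n, ‖lam i‖ ≤ 1)
    (hbio : ∀ i j : Fin n, j ≤ i → lam j (q i) = if i = j then 1 else 0)
    (J : ℕ → X →L[ℝ] X)
    (hJ0 : J 0 = 0)
    (hrange : ∀ k, k ≤ n → ∀ f : X,
      J k f ∈ Submodule.span ℝ (q '' {i : Fin n | (i : ℕ) < k}))
    (hinterp : ∀ k, k ≤ n → ∀ f : X, ∀ i : Fin n, (i : ℕ) < k →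
      lam i (J k f) = lam i f)
    (S : Set X) (ε : ℕ → ℝ)
    (hε0 : ∀ g ∈ S, ‖g‖ ≤ ε 0)
    (hεk : ∀ k, 1 ≤ k → k ≤ n - 1 → ∀ g ∈ S,
      Metric.infDist g (Submodule.span ℝ (q '' {i : Fin n | (i : ℕ) < k}) : Set X) ≤ ε k)
    (f : X) (hf : f ∈ S) (c : Fin n → ℝ)
    (hc : J n f = ∑ i : Fin n, c i • q i) :
    ∀ i : Fin n, |c i| ≤ (1 + ‖J (i : ℕ)‖) * ε (i : ℕ) := by
  intro i
  set k : ℕ := (i : ℕ) with hkdef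
  have hk : k ≤ n := i.isLt.le
  -- uniqueness lemma: an element of X_k annihilated by lam_0,…,lam_{k-1} is zero
  have uniq : ∀ w : X, w ∈ Submodule.span ℝ (q '' {j : Fin n | (j : ℕ) < k}) →
      (∀ m : Fin n, (m : ℕ) < k → lam m w = 0) → w = 0 := by
    intro w hw hz
    rw [Finsupp.mem_span_image_iff_linearCombination] at hw
    obtain ⟨l, hls, hlw⟩ := hw
    have hsum : w = ∑ j : Fin n, l j • q j := by
      rw [← hlw, Finsupp.linearCombination_apply, Finsupp.sum_fintype]
      intro; simp
    have hsupp : ∀ j : Fin n, ¬ (j : ℕ) < k → l j = 0 := by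
      intro j hj
      by_contra h
      exact hj ((Finsupp.mem_supported ℝ l).mp hls (Finsupp.mem_support_iff.mpr h))
    have hz' : ∀ m : ℕ, ∀ j : Fin n, (j : ℕ) = m → l j = 0 := by
      intro m
      induction m using Nat.strong_induction_on with
      | _ m IH =>
        intro j hjm
        by_cases hjk : (j : ℕ) < k
        · have h0 := hz j hjk
          rw [hsum, map_sum] at h0
          have hterm : ∀ b : Fin n, b ∈ Finset.univ → b ≠ j → lam j (l b • q b) = 0 := by
            intro b _ hbj
            rcases lt_trichotomy (b : ℕ) (j : ℕ) with h | h | h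
            · rw [map_smul, IH (b : ℕ) (hjm ▸ h) b rfl]; simp
            · exact absurd (Fin.ext h) hbj
            · rw [map_smul, hbio b j (Fin.le_def.mpr h.le), if_neg hbj]
              simp
          rw [Finset.sum_eq_single j hterm (by simp)] at h0
          rw [map_smul, hbio j j le_rfl, if_pos rfl, smul_eq_mul, mul_one] at h0
          exact h0
        · exact hsupp j hjk
    rw [hsum]
    exact Finset.sum_eq_zero fun j _ => by rw [hz' (j : ℕ) j rfl, zero_smul]
  -- J k is the identity on X_k
  have hproj : ∀ v ∈ Submodule.span ℝ (q '' {j : Fin n | (j : ℕ) < k}), J k v = v := by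
    intro v hv
    have := uniq (J k v - v) (sub_mem (hrange k hk v) hv)
      (fun m hm => by rw [map_sub, hinterp k hk v m hm, sub_self])
    exact sub_eq_zero.mp this
  -- the truncated sum g
  set g : X := ∑ j ∈ Finset.univ.filter (fun j : Fin n => (j : ℕ) < k), c j • q j with hgdef
  have hgspan : g ∈ Submodule.span ℝ (q '' {j : Fin n | (j : ℕ) < k}) := by
    refine Submodule.sum_mem _ fun j hj => Submodule.smul_mem _ _ (Submodule.subset_span ?_)
    exact ⟨j, by simpa using (Finset.mem_filter.mp hj).2, rfl⟩
  have hfull : ∀ m : Fin n, lam m (J n f) = ∑ j : Fin n, c j * lam m (q j) := by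
    intro m
    rw [hc, map_sum]
    exact Finset.sum_congr rfl fun j _ => by rw [map_smul, smul_eq_mul]
  have hgsum : ∀ m : Fin n,
      lam m g = ∑ j ∈ Finset.univ.filter (fun j : Fin n => (j : ℕ) < k), c j * lam m (q j) := by
    intro m
    rw [hgdef, map_sum]
    exact Finset.sum_congr rfl fun j _ => by rw [map_smul, smul_eq_mul]
  have hgm : ∀ m : Fin n, (m : ℕ) < k → lam m g = lam m f := by
    intro m hm
    have hvanish : ∀ j : Fin n, j ∈ Finset.univ →
        j ∉ Finset.univ.filter (fun j : Fin n => (j : ℕ) < k) → c j * lam m (q j) = 0 := by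
      intro j _ hj
      have hjk : ¬ (j : ℕ) < k := by simpa using hj
      have hmj : m ≤ j := Fin.le_def.mpr (le_trans hm.le (not_lt.mp hjk))
      have hne : j ≠ m := by
        intro he
        exact absurd (he ▸ hm) hjk
      rw [hbio j m hmj, if_neg hne, mul_zero]
    have := Finset.sum_subset (Finset.subset_univ _) hvanish
    rw [hgsum m, this, ← hfull m, hinterp n le_rfl f m (lt_of_lt_of_le hm hk)]
  have hJeq : J k f = g := by
    have := uniq (J k f - g) (sub_mem (hrange k hk f) hgspan)
      (fun m hm => by rw [map_sub, hinterp k hk f m hm, hgm m hm, sub_self])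
    exact sub_eq_zero.mp this
  -- extract c i
  have hinotin : i ∉ Finset.univ.filter (fun j : Fin n => (j : ℕ) < k) := by simp; exact hkdef.le
  have hci : c i = lam i (f - J k f) := by
    have hvanish : ∀ j : Fin n, j ∈ Finset.univ →
        j ∉ insert i (Finset.univ.filter (fun j : Fin n => (j : ℕ) < k)) →
        c j * lam i (q j) = 0 := by
      intro j _ hj
      rw [Finset.mem_insert, not_or] at hj
      obtain ⟨hji, hjf⟩ := hj
      have hjk : ¬ (j : ℕ) < k := by simpa using hjf
      have hij : i ≤ j := Fin.le_def.mpr (not_lt.mp hjk)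
      rw [hbio j i hij, if_neg hji, mul_zero]
    have h1 : lam i f = c i + lam i g := by
      rw [← hinterp n le_rfl f i i.isLt, hfull i,
        ← Finset.sum_subset (Finset.subset_univ _) hvanish, Finset.sum_insert hinotin,
        hbio i i le_rfl, if_pos rfl, mul_one, hgsum i]
    rw [map_sub, hJeq]
    linarith
  have hnorm : |c i| ≤ ‖f - J k f‖ := by
    rw [hci]
    calc |lam i (f - J k f)| ≤ ‖lam i‖ * ‖f - J k f‖ := (lam i).le_opNorm _
      _ ≤ 1 * ‖f - J k f‖ := by
          exact mul_le_mul_of_nonneg_right (hlam i) (norm_nonneg _)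
      _ = ‖f - J k f‖ := one_mul _
  rcases Nat.eq_zero_or_pos k with hk0 | hk1
  · have hJ0' : J k f = 0 := by rw [hk0, hJ0]; rfl
    have h1 : |c i| ≤ ε 0 := by
      rw [hJ0', sub_zero] at hnorm
      exact hnorm.trans (hε0 f hf)
    have hε0nn : 0 ≤ ε 0 := le_trans (norm_nonneg f) (hε0 f hf)
    have hJnn : 0 ≤ ‖J k‖ := norm_nonneg _
    have hεeq : ε k = ε 0 := by rw [hk0]
    rw [hεeq]
    nlinarith
  · -- 1 ≤ k ≤ n - 1
    have hk2 : k ≤ n - 1 := Nat.le_sub_one_of_lt i.isLt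
    have hdist := hεk k hk1 hk2 f hf
    set D : Set X := (Submodule.span ℝ (q '' {j : Fin n | (j : ℕ) < k}) : Set X) with hD
    have hDne : D.Nonempty := ⟨0, Submodule.zero_mem _⟩
    have hkey : ‖f - J k f‖ ≤ (1 + ‖J k‖) * Metric.infDist f D := by
      have hpos : (0:ℝ) < 1 + ‖J k‖ := by positivity
      refine le_of_forall_pos_le_add fun η hη => ?_
      have hη' : (0:ℝ) < η / (1 + ‖J k‖) := by positivity
      obtain ⟨v, hvD, hvlt⟩ := (Metric.infDist_lt_iff hDne).mp
        (by linarith : Metric.infDist f D < Metric.infDist f D + η / (1 + ‖J k‖))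
      have hvspan : v ∈ Submodule.span ℝ (q '' {j : Fin n | (j : ℕ) < k}) := hvD
      have hJv : J k v = v := hproj v hvspan
      have : ‖f - J k f‖ ≤ (1 + ‖J k‖) * ‖f - v‖ := by
        calc ‖f - J k f‖ = ‖(f - v) + (v - J k f)‖ := by rw [sub_add_sub_cancel]
          _ ≤ ‖f - v‖ + ‖v - J k f‖ := norm_add_le _ _
          _ = ‖f - v‖ + ‖J k (v - f)‖ := by rw [map_sub, hJv]
          _ ≤ ‖f - v‖ + ‖J k‖ * ‖v - f‖ := by
              exact add_le_add le_rfl ((J k).le_opNorm _)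
          _ = (1 + ‖J k‖) * ‖f - v‖ := by rw [norm_sub_rev v f]; ring
      have hfd : ‖f - v‖ < Metric.infDist f D + η / (1 + ‖J k‖) := by
        rwa [← dist_eq_norm]
      have := this.trans (mul_le_mul_of_nonneg_left hfd.le hpos.le)
      calc ‖f - J k f‖ ≤ (1 + ‖J k‖) * (Metric.infDist f D + η / (1 + ‖J k‖)) := this
        _ = (1 + ‖J k‖) * Metric.infDist f D + η := by rw [mul_add, mul_div_cancel₀ _ hpos.ne']
    calc |c i| ≤ ‖f - J k f‖ := hnorm
      _ ≤ (1 + ‖J k‖) * Metric.infDist f D := hkey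
      _ ≤ (1 + ‖J k‖) * ε k := by
          exact mul_le_mul_of_nonneg_left hdist (by positivity)
end

section
/- The optimal value of the CS-GEIM least-squares problem is controlled by the noise: assume ‖λ_k‖_{X'} ≤ 1 for 1 ≤ k ≤ n, let f ∈ S where sup_{g∈S} dist(g, X_k) ≤ ε_k for 0 ≤ k ≤ n−1 (ε_0 := sup_{g∈S} ‖g‖_X), let α ≥ 1, and let the noisy data be η_i = λ_i(f) + e_i for 1 ≤ i ≤ n with arbitrary reals e_i. Then min_{v ∈ K_n(α)} Σ_{i=1}^n (λ_i(v) − η_i)² ≤ Σ_{i=1}^n e_i². -/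
lemma csgeim_span_vanish {X : Type*} [NormedAddCommGroup X] [NormedSpace ℝ X]
    {n : ℕ} (q : Fin n → X) (lam : Fin n → X →L[ℝ] ℝ)
    (hbio : ∀ i j : Fin n, j ≤ i → lam j (q i) = if i = j then 1 else 0)
    (k : ℕ) (w : X)
    (hw : w ∈ Submodule.span ℝ (q '' {i : Fin n | (i : ℕ) < k}))
    (hvan : ∀ i : Fin n, (i : ℕ) < k → lam i w = 0) : w = 0 := by
  set q' : Fin n → X := fun i => if (i : ℕ) < k then q i else 0 with hq'
  have hsub : Submodule.span ℝ (q '' {i : Fin n | (i : ℕ) < k}) ≤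
      Submodule.span ℝ (Set.range q') := by
    apply Submodule.span_mono
    rintro x ⟨i, hi, rfl⟩
    exact ⟨i, by simp [hq', hi.out]⟩
  obtain ⟨c, hc⟩ := (Submodule.mem_span_range_iff_exists_fun ℝ).1 (hsub hw)
  set a : Fin n → ℝ := fun i => if (i : ℕ) < k then c i else 0 with ha
  have hwa : w = ∑ i : Fin n, a i • q i := by
    rw [← hc]
    refine Finset.sum_congr rfl fun i _ => ?_
    by_cases h : (i : ℕ) < k <;> simp [ha, hq', h]
  have key : ∀ m : ℕ, ∀ j : Fin n, (j : ℕ) = m → a j = 0 := by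
    intro m
    induction m using Nat.strong_induction_on with
    | _ m ih =>
      intro j hj
      by_cases hjk : (j : ℕ) < k
      · have h0 : lam j w = 0 := hvan j hjk
        rw [hwa, map_sum] at h0
        have hsum : ∑ i : Fin n, lam j (a i • q i) = a j := by
          rw [Finset.sum_eq_single j]
          · have := hbio j j le_rfl
            simp [this, smul_eq_mul]
          · intro i _ hij
            by_cases hlt : (i : ℕ) < (j : ℕ)
            · have : a i = 0 := ih (i : ℕ) (hj ▸ hlt) i rfl
              simp [this]
            · have hle : j ≤ i := by rw [Fin.le_def]; omega
              have := hbio i j hle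
              rw [map_smul]
              simp [this, hij]
          · intro h; exact absurd (Finset.mem_univ j) h
        rw [hsum] at h0
        exact h0
      · simp [ha, hjk]
  have : ∀ j : Fin n, a j = 0 := fun j => key (j : ℕ) j rfl
  rw [hwa]
  simp [this]



/-- The optimal value of the CS-GEIM least-squares problem is controlled
by the noise: with `‖λ_k‖ ≤ 1`, `f ∈ S` where `sup_{g∈S} dist(g, X_k) ≤ ε_k` for
`0 ≤ k ≤ n−1` (`ε₀ = sup_{g∈S} ‖g‖`), `α ≥ 1`, and noisy data `ηᵢ = λᵢ(f) + eᵢ`, one has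
`min_{v ∈ Kₙ(α)} Σᵢ (λᵢ(v) − ηᵢ)² ≤ Σᵢ eᵢ²`, where
`Kₙ(α) = { Σᵢ cᵢ qᵢ : |cᵢ| ≤ α (1 + Λ_{i-1}) ε_{i-1} }` (0-based: `|c i| ≤ α (1+‖J i‖) ε i`). -/
theorem csgeim_optimal_value_noise_bound
    {X : Type*} [NormedAddCommGroup X] [NormedSpace ℝ X] [CompleteSpace X]
    (n : ℕ) (q : Fin n → X) (lam : Fin n → X →L[ℝ] ℝ)
    (hlam : ∀ i : Fin n, ‖lam i‖ ≤ 1)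
    (hbio : ∀ i j : Fin n, j ≤ i → lam j (q i) = if i = j then 1 else 0)
    (J : ℕ → X →L[ℝ] X)
    (hJ0 : J 0 = 0)
    (hrange : ∀ k, k ≤ n → ∀ f : X,
      J k f ∈ Submodule.span ℝ (q '' {i : Fin n | (i : ℕ) < k}))
    (hinterp : ∀ k, k ≤ n → ∀ f : X, ∀ i : Fin n, (i : ℕ) < k →
      lam i (J k f) = lam i f)
    (S : Set X) (ε : ℕ → ℝ)
    (hε0 : ∀ g ∈ S, ‖g‖ ≤ ε 0)
    (hεk : ∀ k, 1 ≤ k → k ≤ n - 1 → ∀ g ∈ S,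
      Metric.infDist g (Submodule.span ℝ (q '' {i : Fin n | (i : ℕ) < k}) : Set X) ≤ ε k)
    (α : ℝ) (hα : 1 ≤ α)
    (f : X) (hf : f ∈ S) (e η : Fin n → ℝ)
    (hη : ∀ i : Fin n, η i = lam i f + e i)
    (K : Set X)
    (hK : K = {v : X | ∃ c : Fin n → ℝ,
      (∀ i : Fin n, |c i| ≤ α * ((1 + ‖J (i : ℕ)‖) * ε (i : ℕ))) ∧
      v = ∑ i : Fin n, c i • q i}) :
    ∃ v ∈ K, ∑ i : Fin n, (lam i v - η i) ^ 2 ≤ ∑ i : Fin n, (e i) ^ 2 := by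
  set c : Fin n → ℝ := fun i => lam i f - lam i (J (i : ℕ) f) with hcdef
  set v : X := ∑ i : Fin n, c i • q i with hvdef
  -- Step B: partial sums equal J k f
  have stepB : ∀ k, k ≤ n →
      (∑ i ∈ Finset.univ.filter (fun i : Fin n => (i : ℕ) < k), c i • q i) = J k f := by
    intro k
    induction k with
    | zero =>
      intro _
      rw [hJ0]
      simp
    | succ k ihk =>
      intro hk1
      have hkn : k < n := hk1
      have hkle : k ≤ n := Nat.le_of_lt hkn
      set jk : Fin n := ⟨k, hkn⟩ with hjk
      have hfilter : Finset.univ.filter (fun i : Fin n => (i : ℕ) < k + 1) =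
          insert jk (Finset.univ.filter (fun i : Fin n => (i : ℕ) < k)) := by
        ext i
        simp only [Finset.mem_filter, Finset.mem_insert, Finset.mem_univ, true_and]
        constructor
        · intro h
          rcases Nat.lt_succ_iff_lt_or_eq.1 h with h | h
          · exact Or.inr h
          · exact Or.inl (Fin.ext h)
        · rintro (rfl | h)
          · exact Nat.lt_succ_self k
          · exact Nat.lt_succ_of_lt h
      have hnotmem : jk ∉ Finset.univ.filter (fun i : Fin n => (i : ℕ) < k) := by
        simp [hjk]
      rw [hfilter, Finset.sum_insert hnotmem, ihk hkle]
      -- Show J (k+1) f = c jk • q jk + J k f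
      have hd : J (k + 1) f - (c jk • q jk + J k f) = 0 := by
        apply csgeim_span_vanish q lam hbio (k + 1)
        · have h1 : J (k + 1) f ∈ Submodule.span ℝ
              (q '' {i : Fin n | (i : ℕ) < k + 1}) := hrange (k + 1) hk1 f
          have h2 : J k f ∈ Submodule.span ℝ (q '' {i : Fin n | (i : ℕ) < k + 1}) := by
            refine Submodule.span_mono ?_ (hrange k hkle f)
            exact Set.image_mono (fun i hi => Nat.lt_succ_of_lt hi)
          have h3 : q jk ∈ Submodule.span ℝ (q '' {i : Fin n | (i : ℕ) < k + 1}) :=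
            Submodule.subset_span ⟨jk, Nat.lt_succ_self k, rfl⟩
          exact sub_mem h1 (add_mem (Submodule.smul_mem _ _ h3) h2)
        · intro i hi
          rw [map_sub, hinterp (k + 1) hk1 f i hi, map_add, map_smul]
          rcases Nat.lt_succ_iff_lt_or_eq.1 hi with h | h
          · rw [hinterp k hkle f i h]
            have hle : i ≤ jk := by rw [Fin.le_def]; exact Nat.le_of_lt h
            have hne : jk ≠ i := by
              intro hcontra
              have hval : k = (i : ℕ) := congrArg Fin.val hcontra
              omega
            rw [hbio jk i hle, if_neg hne]
            simp
          · have hi' : i = jk := Fin.ext h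
            rw [hi', hbio jk jk le_rfl, if_pos rfl]
            simp only [hcdef, smul_eq_mul, mul_one, hjk]
            ring
      have := sub_eq_zero.1 hd
      rw [this]
  -- v = J n f
  have hvJ : v = J n f := by
    rw [hvdef, ← stepB n le_rfl]
    rw [Finset.filter_true_of_mem (fun i _ => i.isLt)]
  -- coefficient bounds
  have hcb : ∀ i : Fin n, |c i| ≤ α * ((1 + ‖J (i : ℕ)‖) * ε (i : ℕ)) := by
    intro i
    have hcnorm : |c i| ≤ ‖f - J (i : ℕ) f‖ := by
      have : c i = lam i (f - J (i : ℕ) f) := by rw [map_sub]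
      rw [this]
      calc |lam i (f - J (i : ℕ) f)| ≤ ‖lam i‖ * ‖f - J (i : ℕ) f‖ :=
            (lam i).le_opNorm _
        _ ≤ 1 * ‖f - J (i : ℕ) f‖ :=
            mul_le_mul_of_nonneg_right (hlam i) (norm_nonneg _)
        _ = ‖f - J (i : ℕ) f‖ := one_mul _
    by_cases hi0 : (i : ℕ) = 0
    · rw [hi0]
      rw [hi0] at hcnorm
      rw [hJ0] at hcnorm
      simp only [ContinuousLinearMap.zero_apply, sub_zero] at hcnorm
      have hε0f : ‖f‖ ≤ ε 0 := hε0 f hf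
      have hεnn : (0 : ℝ) ≤ ε 0 := le_trans (norm_nonneg f) hε0f
      calc |c i| ≤ ε 0 := le_trans hcnorm hε0f
        _ = 1 * (1 * ε 0) := by ring
        _ ≤ α * ((1 + ‖J 0‖) * ε 0) := by
            rw [hJ0]
            simp only [norm_zero, add_zero]
            nlinarith
    · -- 1 ≤ i < n
      have hi1 : 1 ≤ (i : ℕ) := Nat.one_le_iff_ne_zero.2 hi0
      have hin : (i : ℕ) ≤ n - 1 := Nat.le_sub_one_of_lt i.isLt
      have hile : (i : ℕ) ≤ n := Nat.le_of_lt i.isLt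
      set s : Set X :=
        (Submodule.span ℝ (q '' {j : Fin n | (j : ℕ) < (i : ℕ)}) : Set X) with hs
      have hsne : s.Nonempty := ⟨0, Submodule.zero_mem _⟩
      set M : ℝ := 1 + ‖J (i : ℕ)‖ with hM
      have hMpos : 0 < M := by positivity
      -- ‖f - J i f‖ ≤ M * dist f w for all w ∈ s
      have hbound : ∀ w ∈ s, ‖f - J (i : ℕ) f‖ ≤ M * dist f w := by
        intro w hw
        have hJw : J (i : ℕ) w = w := by
          have hd : J (i : ℕ) w - w = 0 := by
            apply csgeim_span_vanish q lam hbio (i : ℕ)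
            · exact sub_mem (hrange (i : ℕ) hile w) hw
            · intro j hj
              rw [map_sub, hinterp (i : ℕ) hile w j hj, sub_self]
          exact sub_eq_zero.1 hd
        have : f - J (i : ℕ) f = (f - w) - J (i : ℕ) (f - w) := by
          rw [map_sub, hJw]
          abel
        rw [this, dist_eq_norm]
        calc ‖(f - w) - J (i : ℕ) (f - w)‖ ≤ ‖f - w‖ + ‖J (i : ℕ) (f - w)‖ :=
              norm_sub_le _ _
          _ ≤ ‖f - w‖ + ‖J (i : ℕ)‖ * ‖f - w‖ := by
              have := (J (i : ℕ)).le_opNorm (f - w)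
              linarith
          _ = M * ‖f - w‖ := by rw [hM]; ring
      have hinf : ‖f - J (i : ℕ) f‖ ≤ M * Metric.infDist f s := by
        have hdiv : ‖f - J (i : ℕ) f‖ / M ≤ Metric.infDist f s := by
          rw [Metric.infDist_eq_iInf]
          haveI : Nonempty s := hsne.to_subtype
          apply le_ciInf
          rintro ⟨w, hw⟩
          rw [div_le_iff₀ hMpos, mul_comm]
          exact hbound w hw
        calc ‖f - J (i : ℕ) f‖ = M * (‖f - J (i : ℕ) f‖ / M) := by
              field_simp
          _ ≤ M * Metric.infDist f s := by
              exact mul_le_mul_of_nonneg_left hdiv (le_of_lt hMpos)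
      have hεi : Metric.infDist f s ≤ ε (i : ℕ) := hεk (i : ℕ) hi1 hin f hf
      have hεnn : (0 : ℝ) ≤ ε (i : ℕ) :=
        le_trans (Metric.infDist_nonneg) hεi
      calc |c i| ≤ M * Metric.infDist f s := le_trans hcnorm hinf
        _ ≤ M * ε (i : ℕ) := mul_le_mul_of_nonneg_left hεi (le_of_lt hMpos)
        _ = 1 * (M * ε (i : ℕ)) := (one_mul _).symm
        _ ≤ α * ((1 + ‖J (i : ℕ)‖) * ε (i : ℕ)) := by
            rw [← hM]
            exact mul_le_mul_of_nonneg_right hα (by positivity)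
  refine ⟨v, ?_, ?_⟩
  · rw [hK]
    exact ⟨c, hcb, hvdef⟩
  · have hlv : ∀ i : Fin n, lam i v = lam i f := by
      intro i
      rw [hvJ]
      exact hinterp n le_rfl f i i.isLt
    apply le_of_eq
    refine Finset.sum_congr rfl fun i _ => ?_
    rw [hlv i, hη i]
    ring
end

section
/- Measurement-consistency of the CS-GEIM minimizer: under the hypotheses of the optimal-value bound (‖λ_k‖_{X'} ≤ 1, f ∈ S with dist(f, X_k) ≤ ε_k for 0 ≤ k ≤ n−1, α ≥ 1, η_i = λ_i(f) + e_i), any minimizer v* of v ↦ Σ_{i=1}^n (λ_i(v) − η_i)² over K_n(α) satisfies Σ_{i=1}^n (λ_i(v*) − λ_i(f))² ≤ 4 Σ_{i=1}^n e_i². -/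
/-- Measurement-consistency of the CS-GEIM minimizer: under the hypotheses
of the optimal-value bound (`‖λ_k‖ ≤ 1`, `f ∈ S` with `dist(f, X_k) ≤ ε_k` for
`0 ≤ k ≤ n−1`, `α ≥ 1`, `ηᵢ = λᵢ(f) + eᵢ`), any minimizer `v⋆` of
`v ↦ Σᵢ (λᵢ(v) − ηᵢ)²` over `Kₙ(α)` satisfies `Σᵢ (λᵢ(v⋆) − λᵢ(f))² ≤ 4 Σᵢ eᵢ²`. -/
theorem csgeim_minimizer_measurement_consistency
    {X : Type*} [NormedAddCommGroup X] [NormedSpace ℝ X] [CompleteSpace X]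
    (n : ℕ) (q : Fin n → X) (lam : Fin n → X →L[ℝ] ℝ)
    (hlam : ∀ i : Fin n, ‖lam i‖ ≤ 1)
    (hbio : ∀ i j : Fin n, j ≤ i → lam j (q i) = if i = j then 1 else 0)
    (J : ℕ → X →L[ℝ] X)
    (hJ0 : J 0 = 0)
    (hrange : ∀ k, k ≤ n → ∀ f : X,
      J k f ∈ Submodule.span ℝ (q '' {i : Fin n | (i : ℕ) < k}))
    (hinterp : ∀ k, k ≤ n → ∀ f : X, ∀ i : Fin n, (i : ℕ) < k →
      lam i (J k f) = lam i f)
    (S : Set X) (ε : ℕ → ℝ)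
    (hε0 : ∀ g ∈ S, ‖g‖ ≤ ε 0)
    (hεk : ∀ k, 1 ≤ k → k ≤ n - 1 → ∀ g ∈ S,
      Metric.infDist g (Submodule.span ℝ (q '' {i : Fin n | (i : ℕ) < k}) : Set X) ≤ ε k)
    (α : ℝ) (hα : 1 ≤ α)
    (f : X) (hf : f ∈ S) (e η : Fin n → ℝ)
    (hη : ∀ i : Fin n, η i = lam i f + e i)
    (K : Set X)
    (hK : K = {v : X | ∃ c : Fin n → ℝ,
      (∀ i : Fin n, |c i| ≤ α * ((1 + ‖J (i : ℕ)‖) * ε (i : ℕ))) ∧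
      v = ∑ i : Fin n, c i • q i})
    (vstar : X) (hvK : vstar ∈ K)
    (hvmin : ∀ w ∈ K,
      ∑ i : Fin n, (lam i vstar - η i) ^ 2 ≤ ∑ i : Fin n, (lam i w - η i) ^ 2) :
    ∑ i : Fin n, (lam i vstar - lam i f) ^ 2 ≤ 4 * ∑ i : Fin n, (e i) ^ 2 := by
  classical
  -- Uniqueness of interpolation on the span
  have huniq : ∀ k, k ≤ n → ∀ v ∈ Submodule.span ℝ (q '' {i : Fin n | (i : ℕ) < k}),
      (∀ j : Fin n, (j : ℕ) < k → lam j v = 0) → v = 0 := by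
    intro k hk v hv hz
    obtain ⟨l, hl, rfl⟩ := (Finsupp.mem_span_image_iff_linearCombination ℝ).mp hv
    have hvsum : Finsupp.linearCombination ℝ q l = ∑ i : Fin n, l i • q i := by
      rw [Finsupp.linearCombination_apply, Finsupp.sum_fintype]
      intro i; simp
    have hsupp : ∀ i : Fin n, ¬ ((i : ℕ) < k) → l i = 0 :=
      fun i hi => (Finsupp.mem_supported' ℝ l).mp hl i hi
    have hall : ∀ m : ℕ, ∀ j : Fin n, (j : ℕ) = m → l j = 0 := by
      intro m
      induction m using Nat.strong_induction_on with
      | _ m ih =>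
        intro j hj
        by_cases hjk : (j : ℕ) < k
        · have h0 := hz j hjk
          rw [hvsum, map_sum] at h0
          have hone : ∑ i : Fin n, lam j (l i • q i) = l j := by
            rw [Finset.sum_eq_single j]
            · rw [map_smul, hbio j j le_rfl]; simp
            · intro i _ hij
              rcases lt_or_gt_of_ne hij with h | h
              · have hli : l i = 0 := ih (i : ℕ) (by
                    rw [← hj]; exact h) i rfl
                rw [hli, zero_smul, map_zero]
              · rw [map_smul, hbio i j (le_of_lt h), if_neg hij]; simp
            · intro h; exact absurd (Finset.mem_univ j) h
          rw [hone] at h0; exact h0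
        · exact hsupp j hjk
    have hl0 : ∀ i : Fin n, l i = 0 := fun i => hall (i : ℕ) i rfl
    rw [hvsum]
    exact Finset.sum_eq_zero fun i _ => by rw [hl0 i, zero_smul]
  -- J k is a projection onto the span
  have hproj : ∀ k, k ≤ n → ∀ p ∈ (Submodule.span ℝ (q '' {i : Fin n | (i : ℕ) < k})),
      J k p = p := by
    intro k hk p hp
    have h := huniq k hk (J k p - p)
      (Submodule.sub_mem _ (hrange k hk p) hp)
      (fun j hj => by rw [map_sub, hinterp k hk p j hj, sub_self])
    rwa [sub_eq_zero] at h
  -- error bound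
  have herr : ∀ i : Fin n, ‖f - J (i : ℕ) f‖ ≤ (1 + ‖J (i : ℕ)‖) * ε (i : ℕ) := by
    intro i
    by_cases h0 : (i : ℕ) = 0
    · rw [h0, hJ0]
      have h1 := hε0 f hf
      simp only [ContinuousLinearMap.zero_apply, sub_zero, norm_zero]
      nlinarith [norm_nonneg f]
    · set k := (i : ℕ) with hkdef
      have h1 : 1 ≤ k := Nat.one_le_iff_ne_zero.mpr h0
      have hkn : k ≤ n := le_of_lt i.isLt
      have h2 : k ≤ n - 1 := Nat.le_pred_of_lt i.isLt
      have hdist := hεk k h1 h2 f hf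
      set M : Set X := (Submodule.span ℝ (q '' {j : Fin n | (j : ℕ) < k}) : Set X) with hM
      have hMne : M.Nonempty := ⟨0, Submodule.zero_mem _⟩
      have hpos : (0 : ℝ) < 1 + ‖J k‖ := by positivity
      have hb : ∀ p ∈ M, ‖f - J k f‖ ≤ (1 + ‖J k‖) * dist f p := by
        intro p hp
        have hJp : J k p = p := hproj k hkn p hp
        calc ‖f - J k f‖ = ‖(f - p) + (J k p - J k f)‖ := by rw [hJp]; abel_nf
          _ ≤ ‖f - p‖ + ‖J k p - J k f‖ := norm_add_le _ _
          _ = ‖f - p‖ + ‖J k (p - f)‖ := by rw [map_sub]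
          _ ≤ ‖f - p‖ + ‖J k‖ * ‖p - f‖ := by gcongr; exact (J k).le_opNorm _
          _ = (1 + ‖J k‖) * dist f p := by
              rw [dist_eq_norm, norm_sub_rev p f]; ring
      have hle : ‖f - J k f‖ / (1 + ‖J k‖) ≤ Metric.infDist f M := by
        by_contra hcon
        push_neg at hcon
        obtain ⟨p, hpM, hplt⟩ := (Metric.infDist_lt_iff hMne).mp hcon
        have := hb p hpM
        rw [lt_div_iff₀ hpos] at hplt
        nlinarith
      calc ‖f - J k f‖ = (‖f - J k f‖ / (1 + ‖J k‖)) * (1 + ‖J k‖) := by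
            field_simp
        _ ≤ Metric.infDist f M * (1 + ‖J k‖) := by gcongr
        _ ≤ ε k * (1 + ‖J k‖) := by gcongr
        _ = (1 + ‖J k‖) * ε k := by ring
  -- coefficients
  set c : Fin n → ℝ := fun i => lam i (f - J (i : ℕ) f) with hcdef
  have hcbound : ∀ i : Fin n, |c i| ≤ (1 + ‖J (i : ℕ)‖) * ε (i : ℕ) := by
    intro i
    have h1 : |c i| ≤ ‖lam i‖ * ‖f - J (i : ℕ) f‖ := (lam i).le_opNorm _
    have h2 : ‖lam i‖ * ‖f - J (i : ℕ) f‖ ≤ 1 * ‖f - J (i : ℕ) f‖ := by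
      gcongr; exact hlam i
    calc |c i| ≤ 1 * ‖f - J (i : ℕ) f‖ := h1.trans h2
      _ = ‖f - J (i : ℕ) f‖ := one_mul _
      _ ≤ (1 + ‖J (i : ℕ)‖) * ε (i : ℕ) := herr i
  -- representation of J k f
  have hrep : ∀ k, k ≤ n →
      J k f = ∑ i : Fin n, (if (i : ℕ) < k then c i else 0) • q i := by
    intro k
    induction k with
    | zero => intro _; simp [hJ0]
    | succ k ihk =>
      intro hk
      have hkn : k ≤ n := Nat.le_of_succ_le hk
      have hkltn : k < n := hk
      set ik : Fin n := ⟨k, hkltn⟩ with hikdef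
      have hmono : Submodule.span ℝ (q '' {i : Fin n | (i : ℕ) < k}) ≤
          Submodule.span ℝ (q '' {i : Fin n | (i : ℕ) < k + 1}) := by
        apply Submodule.span_mono
        apply Set.image_mono
        intro i hi
        simp only [Set.mem_setOf_eq] at *
        omega
      have hqmem : q ik ∈ Submodule.span ℝ (q '' {i : Fin n | (i : ℕ) < k + 1}) := by
        apply Submodule.subset_span
        exact ⟨ik, by simp [hikdef], rfl⟩
      have hdiff : J (k + 1) f - J k f - c ik • q ik = 0 := by
        apply huniq (k + 1) hk
        · exact Submodule.sub_mem _
            (Submodule.sub_mem _ (hrange (k + 1) hk f) (hmono (hrange k hkn f)))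
            (Submodule.smul_mem _ _ hqmem)
        · intro j hj
          have hl1 : lam j (J (k + 1) f) = lam j f := hinterp (k + 1) hk f j hj
          by_cases hjk : (j : ℕ) < k
          · have hl2 : lam j (J k f) = lam j f := hinterp k hkn f j hjk
            have hne : ik ≠ j := by
              intro h; rw [← h] at hjk; simp [hikdef] at hjk
            have hq : lam j (q ik) = 0 := by
              rw [hbio ik j (by show (j : ℕ) ≤ k; omega), if_neg hne]
            rw [map_sub, map_sub, map_smul, hl1, hl2, hq]
            simp
          · have hjek : (j : ℕ) = k := by omega
            have hji : j = ik := Fin.ext hjek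
            have hq1 : lam j (q ik) = 1 := by
              rw [← hji, hbio j j le_rfl]; simp
            have hcval : c ik = lam j f - lam j (J k f) := by
              rw [← hji]
              simp only [hcdef, map_sub]
              rw [hjek]
            rw [map_sub, map_sub, map_smul, hl1, hq1, hcval, smul_eq_mul]
            ring
      have hsplit : ∀ i : Fin n, (if (i : ℕ) < k + 1 then c i else 0) • q i
          = (if (i : ℕ) < k then c i else 0) • q i
            + (if i = ik then c ik • q ik else 0) := by
        intro i
        by_cases h : i = ik
        · subst h
          simp only [if_pos rfl]
          rw [if_pos (by simp [hikdef]), if_neg (by simp [hikdef])]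
          simp
        · have hik : (i : ℕ) ≠ k := fun hh => h (Fin.ext hh)
          rw [if_neg h]
          by_cases h2 : (i : ℕ) < k
          · rw [if_pos h2, if_pos (by omega)]; simp
          · rw [if_neg h2, if_neg (by omega)]; simp
      calc J (k + 1) f = J k f + c ik • q ik := by
            have h' : J (k + 1) f - (J k f + c ik • q ik) = 0 := by
              rw [sub_add_eq_sub_sub]; exact hdiff
            exact sub_eq_zero.mp h'
        _ = ∑ i : Fin n, (if (i : ℕ) < k then c i else 0) • q i + c ik • q ik := by
            rw [ihk hkn]
        _ = ∑ i : Fin n, (if (i : ℕ) < k + 1 then c i else 0) • q i := by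
            rw [Finset.sum_congr rfl (fun i _ => hsplit i), Finset.sum_add_distrib]
            congr 1
            rw [Finset.sum_ite_eq' Finset.univ ik (fun _ => c ik • q ik)]
            simp
  -- the competitor w = J n f
  set w : X := ∑ i : Fin n, c i • q i with hwdef
  have hwJ : J n f = w := by
    rw [hrep n le_rfl]
    apply Finset.sum_congr rfl
    intro i _
    rw [if_pos i.isLt]
  have hwK : w ∈ K := by
    rw [hK]
    refine ⟨c, fun i => ?_, rfl⟩
    have hb := hcbound i
    have hnn : (0 : ℝ) ≤ (1 + ‖J (i : ℕ)‖) * ε (i : ℕ) := (abs_nonneg _).trans hb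
    calc |c i| ≤ (1 + ‖J (i : ℕ)‖) * ε (i : ℕ) := hb
      _ = 1 * ((1 + ‖J (i : ℕ)‖) * ε (i : ℕ)) := (one_mul _).symm
      _ ≤ α * ((1 + ‖J (i : ℕ)‖) * ε (i : ℕ)) := by gcongr
  have hlamw : ∀ i : Fin n, lam i w = lam i f := by
    intro i
    rw [← hwJ]
    exact hinterp n le_rfl f i i.isLt
  -- conclusion
  have hwsum : ∑ i : Fin n, (lam i w - η i) ^ 2 = ∑ i : Fin n, (e i) ^ 2 := by
    apply Finset.sum_congr rfl
    intro i _
    rw [hlamw i, hη i]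
    ring
  have hstar : ∑ i : Fin n, (lam i vstar - η i) ^ 2 ≤ ∑ i : Fin n, (e i) ^ 2 := by
    rw [← hwsum]; exact hvmin w hwK
  have hptwise : ∀ i : Fin n, (lam i vstar - lam i f) ^ 2
      ≤ 2 * (lam i vstar - η i) ^ 2 + 2 * (e i) ^ 2 := by
    intro i
    rw [hη i]
    nlinarith [sq_nonneg (lam i vstar - lam i f - 2 * e i)]
  calc ∑ i : Fin n, (lam i vstar - lam i f) ^ 2
      ≤ ∑ i : Fin n, (2 * (lam i vstar - η i) ^ 2 + 2 * (e i) ^ 2) :=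
        Finset.sum_le_sum fun i _ => hptwise i
    _ = 2 * (∑ i : Fin n, (lam i vstar - η i) ^ 2) + 2 * ∑ i : Fin n, (e i) ^ 2 := by
        rw [Finset.sum_add_distrib, ← Finset.mul_sum, ← Finset.mul_sum]
    _ ≤ 2 * (∑ i : Fin n, (e i) ^ 2) + 2 * ∑ i : Fin n, (e i) ^ 2 := by
        gcongr
    _ = 4 * ∑ i : Fin n, (e i) ^ 2 := by ring
end
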